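/- Let F : ℝ³ → ℝ⁴ be F(u,v,w) = (w, u, v, -u² - 3v²/2 + u w² + v w³ - w⁴/4 + w⁵/5 - w⁶/6), h(u,v,w) = 6(2u + 6vw - w² + 4w³ - 2w⁴), and ξ the vector field ξ = (w, w², 1) on ℝ³. Define h' = dh(ξ), h'' = dh'(ξ), h''' = dh''(ξ) (directional derivatives along ξ). Then h(0)=h'(0)=h''(0)=0, h'''(0) = 144 ≠ 0, and the Jacobian matrix of the map (h, h', h'') : ℝ³ → ℝ³ at the origin is invertible. -/

import Mathlib

/-- Directional derivative of φ along the vector field ξ. -/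
noncomputable def dirDeriv (ξ : ℝ × ℝ × ℝ → ℝ × ℝ × ℝ) (φ : ℝ × ℝ × ℝ → ℝ)
    (p : ℝ × ℝ × ℝ) : ℝ :=
  fderiv ℝ φ p (ξ p)

open ContinuousLinearMap

noncomputable def Lu : ℝ × ℝ × ℝ →L[ℝ] ℝ := fst ℝ ℝ (ℝ × ℝ)
noncomputable def Lv : ℝ × ℝ × ℝ →L[ℝ] ℝ := (fst ℝ ℝ ℝ).comp (snd ℝ ℝ (ℝ × ℝ))
noncomputable def Lw : ℝ × ℝ × ℝ →L[ℝ] ℝ := (snd ℝ ℝ ℝ).comp (snd ℝ ℝ (ℝ × ℝ))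

lemma hU (p : ℝ × ℝ × ℝ) : HasFDerivAt (fun q : ℝ × ℝ × ℝ => q.1) Lu p := hasFDerivAt_fst
lemma hV (p : ℝ × ℝ × ℝ) : HasFDerivAt (fun q : ℝ × ℝ × ℝ => q.2.1) Lv p :=
  hasFDerivAt_fst.comp p hasFDerivAt_snd
lemma hW (p : ℝ × ℝ × ℝ) : HasFDerivAt (fun q : ℝ × ℝ × ℝ => q.2.2) Lw p :=
  hasFDerivAt_snd.comp p hasFDerivAt_snd

@[simp] lemma Lu_apply (x : ℝ × ℝ × ℝ) : Lu x = x.1 := rfl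
@[simp] lemma Lv_apply (x : ℝ × ℝ × ℝ) : Lv x = x.2.1 := rfl
@[simp] lemma Lw_apply (x : ℝ × ℝ × ℝ) : Lw x = x.2.2 := rfl

lemma dirDeriv_eq {φ : ℝ × ℝ × ℝ → ℝ} {D : ℝ × ℝ × ℝ →L[ℝ] ℝ} {p : ℝ × ℝ × ℝ}
    (H : HasFDerivAt φ D p) (ξ : ℝ × ℝ × ℝ → ℝ × ℝ × ℝ) :
    dirDeriv ξ φ p = D (ξ p) := by
  simp [dirDeriv, H.fderiv]

/-- Derivative of h at p. -/
noncomputable def Dh (p : ℝ × ℝ × ℝ) : ℝ × ℝ × ℝ →L[ℝ] ℝ :=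
  (12 : ℝ) • Lu + (36 * p.2.2) • Lv
    + (36 * p.2.1 - 12 * p.2.2 + 72 * p.2.2 * p.2.2 - 48 * p.2.2 * p.2.2 * p.2.2) • Lw

/-- Derivative of h' at p. -/
noncomputable def Dh' (p : ℝ × ℝ × ℝ) : ℝ × ℝ × ℝ →L[ℝ] ℝ :=
  (36 : ℝ) • Lv + (144 * p.2.2 - 36 * p.2.2 * p.2.2) • Lw

lemma HhD (p : ℝ × ℝ × ℝ) :
    HasFDerivAt (fun q : ℝ × ℝ × ℝ =>
      6 * (2*q.1 + 6*q.2.1*q.2.2 - q.2.2^2 + 4*q.2.2^3 - 2*q.2.2^4)) (Dh p) p := by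
  have H := ((((((hU p).const_mul 2).add (((hV p).mul (hW p)).const_mul 6)).sub
      ((hW p).mul (hW p))).add ((((hW p).mul (hW p)).mul (hW p)).const_mul 4)).sub
      (((((hW p).mul (hW p)).mul (hW p)).mul (hW p)).const_mul 2)).const_mul 6
  have E : (fun q : ℝ × ℝ × ℝ =>
      6 * (2*q.1 + 6*q.2.1*q.2.2 - q.2.2^2 + 4*q.2.2^3 - 2*q.2.2^4)) =
      (fun q : ℝ × ℝ × ℝ =>
      6 * (2*q.1 + 6*(q.2.1*q.2.2) - q.2.2*q.2.2 + 4*(q.2.2*q.2.2*q.2.2)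
        - 2*(q.2.2*q.2.2*q.2.2*q.2.2))) := by funext q; ring
  rw [E]
  exact H.congr_fderiv (by unfold Dh; simp only [Pi.mul_apply]; module)

lemma Hh'D (p : ℝ × ℝ × ℝ) :
    HasFDerivAt (fun q : ℝ × ℝ × ℝ =>
      36*q.2.1 + 72*q.2.2^2 - 12*q.2.2^3) (Dh' p) p := by
  have H := (((hV p).const_mul 36).add (((hW p).mul (hW p)).const_mul 72)).sub
      ((((hW p).mul (hW p)).mul (hW p)).const_mul 12)
  have E : (fun q : ℝ × ℝ × ℝ => 36*q.2.1 + 72*q.2.2^2 - 12*q.2.2^3) =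
      (fun q : ℝ × ℝ × ℝ =>
        36*q.2.1 + 72*(q.2.2*q.2.2) - 12*(q.2.2*q.2.2*q.2.2)) := by funext q; ring
  rw [E]
  exact H.congr_fderiv (by unfold Dh'; simp only [Pi.mul_apply]; module)

/-- For h = 6(2u + 6vw - w² + 4w³ - 2w⁴) and ξ = (w, w², 1):
    h(0) = h'(0) = h''(0) = 0, h'''(0) = 144, and the Jacobian of (h, h', h'')
    at the origin is invertible — the origin is an A₄-inflection point. -/
theorem stmt5
    (h : ℝ × ℝ × ℝ → ℝ)
    (hh : h = fun p => 6 * (2*p.1 + 6*p.2.1*p.2.2 - p.2.2^2 + 4*p.2.2^3 - 2*p.2.2^4))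
    (ξ : ℝ × ℝ × ℝ → ℝ × ℝ × ℝ)
    (hξ : ξ = fun p => (p.2.2, p.2.2^2, 1))
    (h' h'' h''' : ℝ × ℝ × ℝ → ℝ)
    (hh' : h' = dirDeriv ξ h) (hh'' : h'' = dirDeriv ξ h') (hh''' : h''' = dirDeriv ξ h'') :
    h 0 = 0 ∧ h' 0 = 0 ∧ h'' 0 = 0 ∧ h''' 0 = 144 ∧
    Function.Bijective (fderiv ℝ (fun p => (h p, h' p, h'' p)) 0) := by
  have Hh : ∀ p : ℝ × ℝ × ℝ, HasFDerivAt h (Dh p) p := by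
    intro p; rw [hh]; exact HhD p
  have Eh' : h' = fun p : ℝ × ℝ × ℝ => 36*p.2.1 + 72*p.2.2^2 - 12*p.2.2^3 := by
    rw [hh']
    funext p
    rw [dirDeriv_eq (Hh p) ξ, hξ]
    simp [Dh]
    ring
  have Hh' : ∀ p : ℝ × ℝ × ℝ, HasFDerivAt h' (Dh' p) p := by
    intro p; rw [Eh']; exact Hh'D p
  have Eh'' : h'' = fun p : ℝ × ℝ × ℝ => 144*p.2.2 := by
    rw [hh'']
    funext p
    rw [dirDeriv_eq (Hh' p) ξ, hξ]
    simp [Dh']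
    ring
  have Hh'' : ∀ p : ℝ × ℝ × ℝ, HasFDerivAt h'' ((144:ℝ) • Lw) p := by
    intro p; rw [Eh'']; exact (hW p).const_mul 144
  have Eh''' : h''' = fun _ : ℝ × ℝ × ℝ => (144:ℝ) := by
    rw [hh''']
    funext p
    rw [dirDeriv_eq (Hh'' p) ξ, hξ]
    simp
  refine ⟨by rw [hh]; norm_num, by rw [Eh']; norm_num, by rw [Eh'']; norm_num,
    by rw [Eh'''], ?_⟩
  have HF := (Hh 0).prodMk ((Hh' 0).prodMk (Hh'' 0))
  rw [HF.fderiv]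
  have key : ⇑((Dh 0).prod ((Dh' 0).prod ((144:ℝ) • Lw)))
      = fun x : ℝ × ℝ × ℝ => (12 * x.1, 36 * x.2.1, 144 * x.2.2) := by
    funext x
    simp [Dh, Dh', Prod.ext_iff]
  rw [key]
  constructor
  · intro a b hab
    simp only [Prod.mk.injEq] at hab
    have h1 : a.1 = b.1 := by linarith [hab.1]
    have h2 : a.2.1 = b.2.1 := by linarith [hab.2.1]
    have h3 : a.2.2 = b.2.2 := by linarith [hab.2.2]
    exact Prod.ext h1 (Prod.ext h2 h3)
  · intro y
    refine ⟨(y.1/12, y.2.1/36, y.2.2/144), ?_⟩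
    exact Prod.ext (by ring) (Prod.ext (by ring) (by ring))
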